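/- Let ⟨M, ⊨, f⟩ be an fC-model for the language L and define C(A) = Th(f(Mod(A))) for every A ⊆ L. Then C is a C-logics, i.e., C satisfies Inclusion (A ⊆ C(A) for all A ⊆ L) and Cumulativity (for all A, B ⊆ L, A ⊆ B ⊆ C(A) implies C(A) = C(B)). -/
import Mathlib


/-- `ModSet sat A` is the set of models satisfying every formula of `A`. -/
def ModSet {M L : Type*} (sat : M → L → Prop) (A : Set L) : Set M :=
  {m | ∀ a ∈ A, sat m a}

/-- `ThSet sat X` is the set of formulas satisfied by every model of `X`. -/
def ThSet {M L : Type*} (sat : M → L → Prop) (X : Set M) : Set L :=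
  {a | ∀ m ∈ X, sat m a}

/-- Soundness: the operation defined by an fC-model is a C-logics. -/
theorem stmt_9 {L M : Type*} [Nonempty L] (sat : M → L → Prop) (f : Set M → Set M)
    (hContr : ∀ X : Set M, f X ⊆ X)
    (hLCum : ∀ X Y : Set M, f X ⊆ Y → Y ⊆ X → f Y = f X)
    (C : Set L → Set L)
    (hC : ∀ A : Set L, C A = ThSet sat (f (ModSet sat A))) :
    (∀ A : Set L, A ⊆ C A) ∧
    (∀ A B : Set L, A ⊆ B → B ⊆ C A → C A = C B) := by
  constructor
  · intro A a ha
    rw [hC]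
    intro m hm
    exact hContr (ModSet sat A) hm a ha
  · intro A B hAB hBCA
    have h1 : ModSet sat B ⊆ ModSet sat A := by
      intro m hm a ha
      exact hm a (hAB ha)
    have h2 : f (ModSet sat A) ⊆ ModSet sat B := by
      intro m hm b hb
      have := hBCA hb
      rw [hC] at this
      exact this m hm
    have := hLCum (ModSet sat A) (ModSet sat B) h2 h1
    rw [hC, hC, this]
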